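/- Define f: ℝ → ℝ by f(0) = 0, f(x) = 1/(n+1) + (x - 1/(n+1))/2 for 1/(n+1) ≤ x < 1/n (n ∈ ℕ, n ≥ 1), and f(x) = -f(-x) for -1 < x < 0. Then f is differentiable at 0 with f'(0) = 1. -/

import Mathlib

open Topology Filter


theorem stmt_4 (f : ℝ → ℝ) (hf0 : f 0 = 0)
    (hf : ∀ n : ℕ, 1 ≤ n → ∀ x : ℝ, 1 / (n + 1) ≤ x → x < 1 / n →
      f x = 1 / (n + 1) + (x - 1 / (n + 1)) / 2)
    (hodd : ∀ x ∈ Set.Ioo (-1 : ℝ) 1, f (-x) = - f x) :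
    HasDerivAt f 1 0 := by
  -- key bound on positive side
  have key : ∀ x : ℝ, 0 < x → x < 1 → |f x - x| ≤ x ^ 2 := by
    intro x hx0 hx1
    have hx' : (1 : ℝ) < 1 / x := by rw [lt_div_iff₀ hx0]; linarith
    set N : ℕ := ⌈1 / x⌉₊ with hN
    have hN2 : 2 ≤ N := by
      have : 1 < N := Nat.lt_ceil.mpr (by exact_mod_cast hx')
      omega
    set n : ℕ := N - 1 with hn
    have hn1 : 1 ≤ n := by omega
    have hnN : n + 1 = N := by omega
    have hcast : ((n : ℝ) + 1) = (N : ℝ) := by exact_mod_cast congrArg (Nat.cast : ℕ → ℝ) hnN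
    have hnR : (1 : ℝ) ≤ (n : ℝ) := by exact_mod_cast hn1
    have h1 : 1 / ((n : ℝ) + 1) ≤ x := by
      rw [hcast]
      have hceil : (1 / x : ℝ) ≤ N := Nat.le_ceil _
      rw [div_le_iff₀ hx0] at hceil
      rw [div_le_iff₀ (by positivity : (0:ℝ) < (N:ℝ))]
      linarith
    have h2 : x < 1 / (n : ℝ) := by
      have hlt : (n : ℝ) < 1 / x := by
        have : n < N := by omega
        exact_mod_cast Nat.lt_ceil.mp (by exact_mod_cast this)
      rw [lt_div_iff₀ hx0] at hlt
      rw [lt_div_iff₀ (by linarith : (0:ℝ) < (n:ℝ))]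
      linarith
    have hfx := hf n hn1 x h1 h2
    have habs : |f x - x| = (x - 1 / ((n:ℝ) + 1)) / 2 := by
      rw [hfx]
      rw [abs_of_nonpos (by linarith)]
      ring
    rw [habs]
    have hx2 : (1 / ((n:ℝ)+1)) ^ 2 ≤ x ^ 2 := by
      have h0 : (0:ℝ) < 1 / ((n:ℝ)+1) := by positivity
      nlinarith
    have hb : (x - 1 / ((n:ℝ) + 1)) / 2 ≤ (1 / (n:ℝ) - 1 / ((n:ℝ)+1)) / 2 := by linarith
    have hc : (1 / (n:ℝ) - 1 / ((n:ℝ)+1)) / 2 ≤ (1 / ((n:ℝ)+1)) ^ 2 := by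
      have hn0 : (0:ℝ) < (n:ℝ) := by linarith
      have heq : (1 / (n:ℝ) - 1 / ((n:ℝ)+1)) = 1 / ((n:ℝ)*((n:ℝ)+1)) := by
        field_simp
        ring
      rw [heq, div_pow, one_pow, div_div, div_le_div_iff₀ (by positivity) (by positivity)]
      nlinarith
    linarith
  -- extend to both sides
  have key2 : ∀ x : ℝ, |x| < 1 → |f x - x| ≤ x ^ 2 := by
    intro x hx
    rcases lt_trichotomy x 0 with h | h | h
    · have hmem : -x ∈ Set.Ioo (-1 : ℝ) 1 := by
        constructor <;> [linarith [abs_lt.mp hx]; linarith [abs_lt.mp hx]]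
      have := hodd (-x) hmem
      rw [neg_neg] at this
      have hk := key (-x) (by linarith) (by linarith [abs_lt.mp hx])
      calc |f x - x| = |f (-x) - (-x)| := by rw [this]; rw [← abs_neg]; ring_nf
        _ ≤ (-x) ^ 2 := hk
        _ = x ^ 2 := by ring
    · simp [h, hf0]
    · exact key x h (by rwa [abs_of_pos h] at hx)
  -- conclude derivative
  rw [hasDerivAt_iff_isLittleO]
  rw [Asymptotics.isLittleO_iff]
  intro c hc
  have hev : ∀ᶠ x in 𝓝 (0:ℝ), |x| < min 1 c := by
    have : Metric.ball (0:ℝ) (min 1 c) ∈ 𝓝 (0:ℝ) :=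
      Metric.ball_mem_nhds _ (lt_min one_pos hc)
    filter_upwards [this] with x hx
    simpa [Real.dist_eq] using hx
  filter_upwards [hev] with x hx
  have hx1 : |x| < 1 := lt_of_lt_of_le hx (min_le_left _ _)
  have hxc : |x| ≤ c := le_of_lt (lt_of_lt_of_le hx (min_le_right _ _))
  have := key2 x hx1
  simp only [hf0, sub_zero, smul_eq_mul, mul_one, Real.norm_eq_abs]
  have h2 : x ^ 2 ≤ c * |x| := by nlinarith [abs_nonneg x, sq_abs x]
  linarith
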